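/- For every symmetric 3×3 real matrix A and every R ∈ SO(3), ⟨ψ(R), ψ(AR)⟩ ≥ 4·λ_min(Ā)·|R|_I²(1 − |R|_I²), where Ā := (1/2)(tr(A)·I − A) and λ_min(Ā) denotes its smallest eigenvalue. -/

import Mathlib

open Matrix

/-- `R ∈ SO(3)`: `R Rᵀ = I` and `det R = 1`. -/
def IsSO3 (R : Matrix (Fin 3) (Fin 3) ℝ) : Prop := R * Rᵀ = 1 ∧ R.det = 1

/-- `ψ(A) = vex(P_a(A))` where `P_a(A) = (A - Aᵀ)/2`. -/
noncomputable def psi (A : Matrix (Fin 3) (Fin 3) ℝ) : Fin 3 → ℝ :=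
  ![(A 2 1 - A 1 2)/2, (A 0 2 - A 2 0)/2, (A 1 0 - A 0 1)/2]

/-- Squared normalized Euclidean distance on SO(3): `|R|_I² = (1/4) tr(I - R)`. -/
noncomputable def distI2 (R : Matrix (Fin 3) (Fin 3) ℝ) : ℝ :=
  (1/4) * Matrix.trace (1 - R)

/-- `Ā = (1/2)(tr(A)·I - A)`. -/
noncomputable def abar (A : Matrix (Fin 3) (Fin 3) ℝ) : Matrix (Fin 3) (Fin 3) ℝ :=
  (1/2 : ℝ) • (Matrix.trace A • (1 : Matrix (Fin 3) (Fin 3) ℝ) - A)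

lemma psd_sub_smul {n : Type*} [Fintype n] [DecidableEq n] [Nonempty n]
    (H : Matrix n n ℝ) (hH : H.IsHermitian) :
    (H - (⨅ i, hH.eigenvalues i) • (1 : Matrix n n ℝ)).PosSemidef := by
  set c := ⨅ i, hH.eigenvalues i with hc
  set U : Matrix n n ℝ := (hH.eigenvectorUnitary : Matrix n n ℝ) with hUdef
  have hU : U * star U = 1 := (Matrix.mem_unitaryGroup_iff).mp hH.eigenvectorUnitary.2
  have key : H - c • 1 = U * diagonal (fun i => hH.eigenvalues i - c) * star U := by
    calc H - c • 1
        = U * diagonal (RCLike.ofReal ∘ hH.eigenvalues) * star U - U * (c • 1) * star U := by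
          have hs := hH.spectral_theorem
          simp only [Unitary.conjStarAlgAut_apply, Unitary.coe_star] at hs
          rw [Matrix.mul_smul, Matrix.smul_mul, mul_one, hU, ← hs]
      _ = U * (diagonal (RCLike.ofReal ∘ hH.eigenvalues) - c • 1) * star U := by
          rw [Matrix.mul_sub, Matrix.sub_mul]
      _ = U * diagonal (fun i => hH.eigenvalues i - c) * star U := by
          congr 1
          congr 1
          ext i j
          by_cases h : i = j <;> simp [h, Matrix.diagonal_apply, Matrix.one_apply, RCLike.ofReal]
  rw [key]
  have hdiag : (diagonal (fun i => hH.eigenvalues i - c)).PosSemidef := by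
    rw [posSemidef_diagonal_iff]
    intro i
    have : c ≤ hH.eigenvalues i := ciInf_le (Set.Finite.bddBelow (Set.finite_range _)) i
    linarith
  have := hdiag.mul_mul_conjTranspose_same U
  rwa [Matrix.star_eq_conjTranspose]

lemma eig_bound {n : Type*} [Fintype n] [DecidableEq n] [Nonempty n]
    (H : Matrix n n ℝ) (hH : H.IsHermitian) (x : n → ℝ) :
    (⨅ i, hH.eigenvalues i) * (x ⬝ᵥ x) ≤ x ⬝ᵥ (H *ᵥ x) := by
  have h := (psd_sub_smul H hH).dotProduct_mulVec_nonneg x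
  simp only [RCLike.re_to_real, star_trivial] at h
  rw [Matrix.sub_mulVec, dotProduct_sub, Matrix.smul_mulVec, Matrix.one_mulVec,
    dotProduct_smul, smul_eq_mul] at h
  linarith

lemma so3_normsq (R : Matrix (Fin 3) (Fin 3) ℝ) (hR : IsSO3 R) :
    psi R ⬝ᵥ psi R = 4 * distI2 R * (1 - distI2 R) := by
  obtain ⟨hP, hdet⟩ := hR
  have hadj : R.adjugate = Rᵀ := by
    calc R.adjugate = (Rᵀ * R) * R.adjugate := by
          rw [mul_eq_one_comm.mp hP, one_mul]
      _ = Rᵀ * (R * R.adjugate) := by rw [Matrix.mul_assoc]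
      _ = Rᵀ := by rw [Matrix.mul_adjugate, hdet, one_smul, mul_one]
  rw [Matrix.adjugate_fin_three] at hadj
  have d0 := congrFun (congrFun hadj 0) 0
  have d1 := congrFun (congrFun hadj 1) 1
  have d2 := congrFun (congrFun hadj 2) 2
  simp [Matrix.transpose_apply] at d0 d1 d2
  have e : ∀ i j : Fin 3, (R * Rᵀ) i j = (1 : Matrix (Fin 3) (Fin 3) ℝ) i j :=
    fun i j => by rw [hP]
  have e0 := e 0 0; have e1 := e 1 1; have e2 := e 2 2
  simp [Matrix.mul_apply, Fin.sum_univ_three, Matrix.one_apply, Matrix.transpose_apply] at e0 e1 e2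
  simp only [psi, distI2, dotProduct, Fin.sum_univ_three, Matrix.trace_fin_three,
    Matrix.sub_apply, Matrix.one_apply, Matrix.cons_val_zero, Matrix.cons_val_one,
    Matrix.head_cons, Matrix.cons_val_two, Matrix.tail_cons]
  norm_num
  linear_combination (1/4) * (e0 + e1 + e2) + (1/2) * (d0 + d1 + d2)

lemma so3_key (A R : Matrix (Fin 3) (Fin 3) ℝ) (hA : Aᵀ = A) (hR : IsSO3 R) :
    psi R ⬝ᵥ psi (A * R) = psi R ⬝ᵥ (abar A *ᵥ psi R) := by
  obtain ⟨hP, hdet⟩ := hR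
  have hQ : Rᵀ * R = 1 := mul_eq_one_comm.mp hP
  have p : ∀ i j : Fin 3, (R * Rᵀ) i j = (1 : Matrix (Fin 3) (Fin 3) ℝ) i j :=
    fun i j => by rw [hP]
  have q : ∀ i j : Fin 3, (Rᵀ * R) i j = (1 : Matrix (Fin 3) (Fin 3) ℝ) i j :=
    fun i j => by rw [hQ]
  have a10 : A 1 0 = A 0 1 := congrFun (congrFun hA 0) 1
  have a20 : A 2 0 = A 0 2 := congrFun (congrFun hA 0) 2
  have a21 : A 2 1 = A 1 2 := congrFun (congrFun hA 1) 2
  have p00 := p 0 0; have p01 := p 0 1; have p02 := p 0 2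
  have p10 := p 1 0; have p11 := p 1 1; have p12 := p 1 2
  have p20 := p 2 0; have p21 := p 2 1; have p22 := p 2 2
  have q00 := q 0 0; have q01 := q 0 1; have q02 := q 0 2
  have q10 := q 1 0; have q11 := q 1 1; have q12 := q 1 2
  have q20 := q 2 0; have q21 := q 2 1; have q22 := q 2 2
  simp [Matrix.mul_apply, Fin.sum_univ_three, Matrix.one_apply, Matrix.transpose_apply] at p00 p01 p02 p10 p11 p12 p20 p21 p22 q00 q01 q02 q10 q11 q12 q20 q21 q22
  simp only [psi, abar, dotProduct, Matrix.mulVec, Matrix.mul_apply,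
    Fin.sum_univ_three, Matrix.trace_fin_three, Matrix.smul_apply, Matrix.sub_apply,
    Matrix.one_apply, smul_eq_mul, Matrix.cons_val_zero, Matrix.cons_val_one,
    Matrix.head_cons, Matrix.cons_val_two, Matrix.tail_cons]
  norm_num [Fin.ext_iff]
  rw [a10, a20, a21]
  linear_combination ((A 0 0 / 8) * (p00 - q00) + (A 0 1 / 8) * (p01 + p10 - q01 - q10) + (A 0 2 / 8) * (p02 + p20 - q02 - q20) + (A 1 1 / 8) * (p11 - q11) + (A 1 2 / 8) * (p12 + p21 - q12 - q21) + (A 2 2 / 8) * (p22 - q22))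

/-- For symmetric `A` and `R ∈ SO(3)`:
`⟨ψ(R), ψ(AR)⟩ ≥ 4 λ_min(Ā) |R|_I² (1 - |R|_I²)`. -/
theorem stmt16 (A R : Matrix (Fin 3) (Fin 3) ℝ) (hA : Aᵀ = A)
    (hH : (abar A).IsHermitian) (hR : IsSO3 R) :
    4 * (⨅ i : Fin 3, hH.eigenvalues i) * distI2 R * (1 - distI2 R) ≤
      psi R ⬝ᵥ psi (A * R) := by
  have h1 := so3_normsq R hR
  have h2 := so3_key A R hA hR
  have h3 := eig_bound (abar A) hH (psi R)
  calc 4 * (⨅ i : Fin 3, hH.eigenvalues i) * distI2 R * (1 - distI2 R)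
      = (⨅ i : Fin 3, hH.eigenvalues i) * (4 * distI2 R * (1 - distI2 R)) := by ring
    _ = (⨅ i : Fin 3, hH.eigenvalues i) * (psi R ⬝ᵥ psi R) := by rw [h1]
    _ ≤ psi R ⬝ᵥ (abar A *ᵥ psi R) := h3
    _ = psi R ⬝ᵥ psi (A * R) := h2.symm
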